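/- arXiv:1511.04385 — 8 statements merged into one kernel-verified Lean document; each statement's English description precedes it below -/
import Mathlib

section
/- Let N = (2q₁+1)(2q₂+1) be a safe semiprime with q₁ ≠ q₂ and q₁, q₂ > 2. Then the multiplicative order of 2 modulo N is either q₁·q₂ or 2·q₁·q₂. -/
lemma order_aux (q : ℕ) (hq : q.Prime) (hp : (2 * q + 1).Prime) (hq2 : 2 < q) :
    orderOf (2 : ZMod (2 * q + 1)) = q ∨ orderOf (2 : ZMod (2 * q + 1)) = 2 * q := by
  haveI : Fact (2 * q + 1).Prime := ⟨hp⟩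
  have h2 : ((2 : ℕ) : ZMod (2 * q + 1)) = (2 : ZMod (2 * q + 1)) := by norm_cast
  have hne0 : (2 : ZMod (2 * q + 1)) ≠ 0 := by
    rw [← h2]
    intro h
    have := (ZMod.natCast_eq_zero_iff 2 (2 * q + 1)).mp h
    have := Nat.le_of_dvd (by norm_num) this
    omega
  have hdvd : orderOf (2 : ZMod (2 * q + 1)) ∣ 2 * q := by
    have := ZMod.pow_card_sub_one_eq_one hne0
    have h' : (2 : ZMod (2 * q + 1)) ^ (2 * q) = 1 := by
      simpa using this
    exact orderOf_dvd_of_pow_eq_one h'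
  set d := orderOf (2 : ZMod (2 * q + 1)) with hd
  have hd1 : d ≠ 1 := by
    intro h
    have : (2 : ZMod (2 * q + 1)) = 1 := orderOf_eq_one_iff.mp h
    have h21 : ((2 : ℕ) : ZMod (2 * q + 1)) = ((1 : ℕ) : ZMod (2 * q + 1)) := by
      rw [h2, this]; norm_cast
    have := (ZMod.natCast_eq_natCast_iff 2 1 (2 * q + 1)).mp h21
    have := (Nat.modEq_iff_dvd' (by norm_num)).mp this.symm
    have := Nat.le_of_dvd (by norm_num) this
    omega
  have hd2 : d ≠ 2 := by
    intro h
    have hpow : (2 : ZMod (2 * q + 1)) ^ d = 1 := pow_orderOf_eq_one _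
    rw [h] at hpow
    have h41 : ((4 : ℕ) : ZMod (2 * q + 1)) = ((1 : ℕ) : ZMod (2 * q + 1)) := by
      push_cast
      rw [show (4 : ZMod (2 * q + 1)) = 2 ^ 2 by norm_num, hpow]
    have := (ZMod.natCast_eq_natCast_iff 4 1 (2 * q + 1)).mp h41
    have := (Nat.modEq_iff_dvd' (by norm_num)).mp this.symm
    have := Nat.le_of_dvd (by norm_num) this
    omega
  by_cases hqd : q ∣ d
  · obtain ⟨e, he⟩ := hqd
    have he2 : e ∣ 2 := by
      have : q * e ∣ q * 2 := by rw [← he, mul_comm]; exact hdvd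
      exact (mul_dvd_mul_iff_left hq.pos.ne').mp this
    rcases (Nat.prime_two).eq_one_or_self_of_dvd e he2 with h | h
    · left; rw [he, h, mul_one]
    · right; rw [he, h]; ring
  · exfalso
    have hcop : Nat.Coprime d q := (hq.coprime_iff_not_dvd.mpr hqd).symm
    have : d ∣ 2 := (Nat.Coprime.dvd_of_dvd_mul_right hcop hdvd)
    rcases (Nat.prime_two).eq_one_or_self_of_dvd d this with h | h
    · exact hd1 h
    · exact hd2 h

theorem order_of_two_mod_safe_semiprime
    (q₁ q₂ N : ℕ) (hq₁ : q₁.Prime) (hq₂ : q₂.Prime)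
    (hp₁ : (2 * q₁ + 1).Prime) (hp₂ : (2 * q₂ + 1).Prime)
    (hne : q₁ ≠ q₂) (hq₁2 : 2 < q₁) (hq₂2 : 2 < q₂)
    (hN : N = (2 * q₁ + 1) * (2 * q₂ + 1)) :
    orderOf (2 : ZMod N) = q₁ * q₂ ∨ orderOf (2 : ZMod N) = 2 * q₁ * q₂ := by
  subst hN
  have hpne : (2 * q₁ + 1) ≠ (2 * q₂ + 1) := by omega
  have hcop : Nat.Coprime (2 * q₁ + 1) (2 * q₂ + 1) :=
    (Nat.coprime_primes hp₁ hp₂).mpr hpne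
  set e := ZMod.chineseRemainder hcop with he
  have hord : orderOf (2 : ZMod ((2 * q₁ + 1) * (2 * q₂ + 1))) =
      orderOf (e (2 : ZMod ((2 * q₁ + 1) * (2 * q₂ + 1)))) :=
    (orderOf_injective e.toRingHom.toMonoidHom e.injective 2).symm
  have he2 : e (2 : ZMod ((2 * q₁ + 1) * (2 * q₂ + 1))) =
      ((2 : ZMod (2 * q₁ + 1)), (2 : ZMod (2 * q₂ + 1))) := by
    have : e.toRingHom (2 : ZMod ((2 * q₁ + 1) * (2 * q₂ + 1))) = 2 := map_ofNat _ 2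
    simpa [Prod.ext_iff] using this
  rw [hord, he2, Prod.orderOf]
  simp only []
  have hcq : Nat.Coprime q₁ q₂ := (Nat.coprime_primes hq₁ hq₂).mpr hne
  have hc2₁ : Nat.Coprime q₁ 2 := (Nat.coprime_primes hq₁ Nat.prime_two).mpr (by omega)
  have hc2₂ : Nat.Coprime 2 q₂ := (Nat.coprime_primes Nat.prime_two hq₂).mpr (by omega)
  rcases order_aux q₁ hq₁ hp₁ hq₁2 with h1 | h1 <;>
    rcases order_aux q₂ hq₂ hp₂ hq₂2 with h2 | h2 <;> rw [h1, h2]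
  · left; exact hcq.lcm_eq_mul
  · right
    have : Nat.Coprime q₁ (2 * q₂) := Nat.Coprime.mul_right hc2₁ hcq
    rw [this.lcm_eq_mul]; ring
  · right
    have : Nat.Coprime (2 * q₁) q₂ := Nat.Coprime.mul hc2₂ hcq
    rw [this.lcm_eq_mul]
  · right
    rw [Nat.lcm_mul_left, hcq.lcm_eq_mul]; ring
end

section
/- Let N = (2q₁+1)(2q₂+1) be a safe semiprime with q₁, q₂ distinct primes greater than 2. Then the number of units a modulo N whose multiplicative order is even equals (3/4)·φ(N), i.e., equals 3·q₁·q₂. -/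
open Finset

lemma cyc_count (G : Type*) [Group G] [Fintype G] [DecidableEq G] [IsCyclic G]
    {d : ℕ} (hd : d ∣ Fintype.card G) (hd0 : 0 < d) :
    #{x : G | x ^ d = 1} = d := by
  refine le_antisymm (IsCyclic.card_pow_eq_one_le hd0) ?_
  obtain ⟨g, hg⟩ := IsCyclic.exists_generator (α := G)
  have hog : orderOf g = Fintype.card G := by
    rw [orderOf_eq_card_of_forall_mem_zpowers hg, Nat.card_eq_fintype_card]
  set a := g ^ (Fintype.card G / d) with ha
  have hoa : orderOf a = d := by
    rw [ha, orderOf_pow, hog, Nat.gcd_eq_right (Nat.div_dvd_of_dvd hd),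
      Nat.div_div_self hd Fintype.card_ne_zero]
  have := Finset.card_le_card_of_injOn (f := fun k => a ^ k)
    (s := Finset.range d) (t := {x : G | x ^ d = 1}) ?_ ?_
  · simpa using this
  · intro k _
    simp only [Finset.mem_coe, mem_filter, mem_univ, true_and, Set.mem_setOf_eq]
    rw [← pow_mul, mul_comm, pow_mul, ← hoa, pow_orderOf_eq_one, one_pow]
  · intro i hi j hj hij
    simp only [coe_range, Set.mem_Iio] at hi hj
    exact pow_injOn_Iio_orderOf (by simpa [hoa] using hi) (by simpa [hoa] using hj) hij

lemma odd_of_dvd' {d n : ℕ} (h : d ∣ n) (hn : Odd n) : Odd d := by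
  rw [← Nat.not_even_iff_odd] at hn ⊢
  exact fun hd => hn ((even_iff_two_dvd).mpr (hd.two_dvd.trans h))

lemma odd_count (q : ℕ) (hq : q.Prime) [hpf : Fact ((2 * q + 1).Prime)] (hq2 : 2 < q) :
    #{u : (ZMod (2 * q + 1))ˣ | Odd (orderOf u)} = q := by
  have hp := hpf.out
  have hcard : Fintype.card (ZMod (2 * q + 1))ˣ = 2 * q := by
    rw [ZMod.card_units_eq_totient, Nat.totient_prime hp]; omega
  have key : ∀ u : (ZMod (2 * q + 1))ˣ, Odd (orderOf u) ↔ u ^ q = 1 := by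
    intro u
    constructor
    · intro hodd
      have hdvd : orderOf u ∣ 2 * q := by
        have := orderOf_dvd_card (x := u); rwa [hcard] at this
      have hcop : (orderOf u).Coprime 2 :=
        ((Nat.prime_two.coprime_iff_not_dvd).mpr
          (fun hd => Nat.not_even_iff_odd.mpr hodd ((even_iff_two_dvd).mpr hd))).symm
      have h2 : orderOf u ∣ q * 2 := dvd_trans hdvd (dvd_of_eq (mul_comm 2 q))
      exact orderOf_dvd_iff_pow_eq_one.mp (hcop.dvd_of_dvd_mul_right h2)
    · intro h1
      have hdvd : orderOf u ∣ q := orderOf_dvd_iff_pow_eq_one.mpr h1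
      exact odd_of_dvd' hdvd (hq.odd_of_ne_two (by omega))
  have heq : (Finset.univ.filter fun u : (ZMod (2 * q + 1))ˣ => Odd (orderOf u))
      = Finset.univ.filter (fun u => u ^ q = 1) := Finset.filter_congr fun u _ => by
        simpa using key u
  rw [heq]
  exact cyc_count _ (by rw [hcard]; exact ⟨2, (mul_comm 2 q)⟩) (by omega)

lemma odd_lcm_iff {a b : ℕ} (_ha : a ≠ 0) (_hb : b ≠ 0) :
    Odd (Nat.lcm a b) ↔ Odd a ∧ Odd b := by
  constructor
  · exact fun h => ⟨odd_of_dvd' (Nat.dvd_lcm_left a b) h, odd_of_dvd' (Nat.dvd_lcm_right a b) h⟩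
  · rintro ⟨h1, h2⟩
    exact odd_of_dvd' (Nat.lcm_dvd (dvd_mul_right a b) (dvd_mul_left b a)) (h1.mul h2)

theorem even_order_count_mod_safe_semiprime
    (q₁ q₂ N : ℕ) (hq₁ : q₁.Prime) (hq₂ : q₂.Prime)
    (hp₁ : (2 * q₁ + 1).Prime) (hp₂ : (2 * q₂ + 1).Prime)
    (hne : q₁ ≠ q₂) (hq₁2 : 2 < q₁) (hq₂2 : 2 < q₂)
    (hN : N = (2 * q₁ + 1) * (2 * q₂ + 1)) :
    Nat.card {a : (ZMod N)ˣ // Even (orderOf a)} = 3 * q₁ * q₂ ∧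
    4 * Nat.card {a : (ZMod N)ˣ // Even (orderOf a)} = 3 * Nat.totient N := by
  subst hN
  haveI F1 : Fact ((2 * q₁ + 1).Prime) := ⟨hp₁⟩
  haveI F2 : Fact ((2 * q₂ + 1).Prime) := ⟨hp₂⟩
  have hcop : Nat.Coprime (2 * q₁ + 1) (2 * q₂ + 1) :=
    (Nat.coprime_primes hp₁ hp₂).mpr (by omega)
  haveI : NeZero ((2 * q₁ + 1) * (2 * q₂ + 1)) := ⟨by positivity⟩
  have htot : Nat.totient ((2 * q₁ + 1) * (2 * q₂ + 1)) = 4 * (q₁ * q₂) := by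
    rw [Nat.totient_mul hcop, Nat.totient_prime hp₁, Nat.totient_prime hp₂]
    rw [Nat.add_sub_cancel, Nat.add_sub_cancel]; ring
  set G := (ZMod ((2 * q₁ + 1) * (2 * q₂ + 1)))ˣ
  have hcardG : Fintype.card G = 4 * (q₁ * q₂) := by
    rw [ZMod.card_units_eq_totient, htot]
  let e : G ≃* (ZMod (2 * q₁ + 1))ˣ × (ZMod (2 * q₂ + 1))ˣ :=
    (Units.mapEquiv (ZMod.chineseRemainder hcop).toMulEquiv).trans MulEquiv.prodUnits
  have hOddCount : Fintype.card {a : G // Odd (orderOf a)} = q₁ * q₂ := by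
    have e1 : {a : G // Odd (orderOf a)} ≃
        {z : (ZMod (2 * q₁ + 1))ˣ × (ZMod (2 * q₂ + 1))ˣ //
          Odd (orderOf z.1) ∧ Odd (orderOf z.2)} :=
      Equiv.subtypeEquiv e.toEquiv (fun a => by
        change Odd (orderOf a) ↔ Odd (orderOf (e a).1) ∧ Odd (orderOf (e a).2)
        rw [← e.orderOf_eq a, Prod.orderOf,
          odd_lcm_iff (orderOf_pos _).ne' (orderOf_pos _).ne'])
    rw [Fintype.card_congr (e1.trans (Equiv.subtypeProdEquivProd (p := fun x : (ZMod (2 * q₁ + 1))ˣ => Odd (orderOf x)) (q := fun y : (ZMod (2 * q₂ + 1))ˣ => Odd (orderOf y)))), Fintype.card_prod,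
      Fintype.card_subtype, Fintype.card_subtype,
      odd_count q₁ hq₁ hq₁2, odd_count q₂ hq₂ hq₂2]
  have hEven : Nat.card {a : G // Even (orderOf a)} = 3 * q₁ * q₂ := by
    rw [Nat.card_eq_fintype_card]
    have e2 : {a : G // Even (orderOf a)} ≃ {a : G // ¬ Odd (orderOf a)} :=
      Equiv.subtypeEquiv (Equiv.refl G) (fun a => (Nat.not_odd_iff_even).symm)
    rw [Fintype.card_congr e2, Fintype.card_subtype_compl, hOddCount, hcardG]
    ring_nf
    omega
  exact ⟨hEven, by rw [hEven, htot]; ring⟩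
end

section
/- Let N = (2q₁+1)(2q₂+1) be a safe semiprime with q₁, q₂ distinct primes greater than 2. The number of units a modulo N such that the order r of a is even and a^{r/2} ≡ −1 (mod N) equals q₁·q₂, i.e., exactly one quarter of all units. -/
open Finset

/-- In a monoid, if `j` is an element with `j ^ 2 = 1`, `j ≠ 1`, `m` is odd and
`a ^ (2 * m) = 1`, then the "half-order" condition is equivalent to `a ^ m = j`. -/
lemma halforder_iff_aux {M : Type*} [Monoid M] (j a : M) (hj2 : j ^ 2 = 1) (hj1 : j ≠ 1)
    (m : ℕ) (hm : Odd m) (ha : a ^ (2 * m) = 1) :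
    (Even (orderOf a) ∧ a ^ (orderOf a / 2) = j) ↔ a ^ m = j := by
  have hr : orderOf a ∣ 2 * m := orderOf_dvd_of_pow_eq_one ha
  constructor
  · rintro ⟨hev, hhalf⟩
    obtain ⟨s, hs⟩ := hev
    have hs2 : orderOf a = 2 * s := by omega
    have hsm : s ∣ m := by
      rw [hs2] at hr
      exact (Nat.mul_dvd_mul_iff_left (by norm_num : 0 < 2)).mp hr
    obtain ⟨t, ht⟩ := hsm
    have hto : Odd t := (Nat.odd_mul.mp (ht ▸ hm)).2
    have hdiv : orderOf a / 2 = s := by omega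
    rw [hdiv] at hhalf
    obtain ⟨k, hk⟩ := hto
    calc a ^ m = (a ^ s) ^ t := by rw [← pow_mul, ← ht]
      _ = j ^ t := by rw [hhalf]
      _ = j := by rw [hk, pow_succ, pow_mul, hj2, one_pow, one_mul]
  · intro hmj
    have hndvd : ¬ orderOf a ∣ m := fun h =>
      hj1 (by rw [← hmj, orderOf_dvd_iff_pow_eq_one.mp h])
    have hev : Even (orderOf a) := by
      by_contra hodd
      rw [Nat.not_even_iff_odd, Nat.odd_iff] at hodd
      have h2 : ¬ (2 ∣ orderOf a) := by omega
      have hc : Nat.Coprime (orderOf a) 2 :=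
        (Nat.prime_two.coprime_iff_not_dvd.mpr h2).symm
      exact hndvd (hc.dvd_of_dvd_mul_left (mul_comm 2 m ▸ hr))
    refine ⟨hev, ?_⟩
    obtain ⟨s, hs⟩ := hev
    have hs2 : orderOf a = 2 * s := by omega
    have hsm : s ∣ m := by
      rw [hs2] at hr
      exact (Nat.mul_dvd_mul_iff_left (by norm_num : 0 < 2)).mp hr
    obtain ⟨t, ht⟩ := hsm
    have hto : Odd t := (Nat.odd_mul.mp (ht ▸ hm)).2
    have hdiv : orderOf a / 2 = s := by omega
    rw [hdiv]
    have hu2 : (a ^ s) ^ 2 = 1 := by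
      rw [← pow_mul, mul_comm, ← hs2, pow_orderOf_eq_one]
    obtain ⟨k, hk⟩ := hto
    have key : (a ^ s) ^ t = a ^ s := by
      rw [hk, pow_succ, pow_mul, hu2, one_pow, one_mul]
    rw [← hmj, ht, pow_mul, key]

/-- Counting lemma in a prime field: the number of units with `x ^ m = -1`
is `(p - 1) / 2` when `(p-1) ∣ 2m` but `(p-1) ∤ m`. -/
lemma count_pow_eq_neg_one_aux (p m : ℕ) (hp : p.Prime) (hp2 : 2 < p)
    (hd : (p - 1) ∣ 2 * m) (hnd : ¬ (p - 1) ∣ m) :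
    2 * Nat.card {x : (ZMod p)ˣ // x ^ m = -1} = p - 1 := by
  haveI : Fact p.Prime := ⟨hp⟩
  haveI : Fact (2 < p) := ⟨hp2⟩
  classical
  have hne : (-1 : (ZMod p)ˣ) ≠ 1 := by
    intro h
    apply ZMod.neg_one_ne_one (n := p)
    have := congrArg Units.val h
    simpa using this
  have hdi : ∀ x : (ZMod p)ˣ, x ^ m = 1 ∨ x ^ m = -1 := by
    intro x
    obtain ⟨c, hc⟩ := hd
    have h1 : x ^ (2 * m) = 1 := by
      rw [hc, pow_mul, ZMod.units_pow_card_sub_one_eq_one, one_pow]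
    have h2 : (x ^ m) ^ 2 = 1 := by
      rw [← pow_mul, mul_comm]; exact h1
    have h3 : ((x ^ m : (ZMod p)ˣ) : ZMod p) ^ 2 = 1 := by
      have := congrArg Units.val h2
      simpa using this
    rcases sq_eq_one_iff.mp h3 with h | h
    · left; exact Units.ext (by simpa using h)
    · right; exact Units.ext (by simpa using h)
  obtain ⟨g, hg⟩ := IsCyclic.exists_generator (α := (ZMod p)ˣ)
  have hog : orderOf g = p - 1 := by
    rw [orderOf_eq_card_of_forall_mem_zpowers hg, Nat.card_eq_fintype_card, ZMod.card_units]
  have hgm : g ^ m = -1 := by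
    rcases hdi g with h | h
    · exact absurd (hog ▸ orderOf_dvd_of_pow_eq_one h) hnd
    · exact h
  -- bijection between the two fibers
  have hinv : (g ^ m)⁻¹ = (-1 : (ZMod p)ˣ) := by
    rw [hgm]; exact Units.ext (by simp)
  let e1 : {x : (ZMod p)ˣ // x ^ m = 1} ≃ {x : (ZMod p)ˣ // x ^ m = -1} :=
    { toFun := fun x => ⟨g * x.1, by rw [mul_pow, hgm, x.2, mul_one]⟩
      invFun := fun y => ⟨g⁻¹ * y.1, by
        rw [mul_pow, y.2, inv_pow, hinv, neg_mul, one_mul, neg_neg]⟩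
      left_inv := fun x => by simp [Subtype.ext_iff]
      right_inv := fun y => by simp [Subtype.ext_iff] }
  have hcard_eq : Nat.card {x : (ZMod p)ˣ // x ^ m = 1}
      = Nat.card {x : (ZMod p)ˣ // x ^ m = -1} := Nat.card_congr e1
  have hpart : (univ.filter fun x : (ZMod p)ˣ => x ^ m = 1).card
      + (univ.filter fun x : (ZMod p)ˣ => ¬ x ^ m = 1).card = p - 1 := by
    rw [Finset.card_filter_add_card_filter_not, card_univ, ZMod.card_units]
  have hfe : (univ.filter fun x : (ZMod p)ˣ => ¬ x ^ m = 1)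
      = univ.filter fun x : (ZMod p)ˣ => x ^ m = -1 := by
    ext x
    simp only [mem_filter, mem_univ, true_and]
    constructor
    · intro h; exact (hdi x).resolve_left h
    · intro h h1; exact hne (by rw [← h, h1])
  rw [hfe] at hpart
  have hc1 : Nat.card {x : (ZMod p)ˣ // x ^ m = 1}
      = (univ.filter fun x : (ZMod p)ˣ => x ^ m = 1).card := by
    rw [Nat.card_eq_fintype_card, Fintype.card_subtype]
  have hc2 : Nat.card {x : (ZMod p)ˣ // x ^ m = -1}
      = (univ.filter fun x : (ZMod p)ˣ => x ^ m = -1).card := by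
    rw [Nat.card_eq_fintype_card, Fintype.card_subtype]
  omega

theorem minus_one_halforder_count_mod_safe_semiprime
    (q₁ q₂ N : ℕ) (hq₁ : q₁.Prime) (hq₂ : q₂.Prime)
    (hp₁ : (2 * q₁ + 1).Prime) (hp₂ : (2 * q₂ + 1).Prime)
    (hne : q₁ ≠ q₂) (hq₁2 : 2 < q₁) (hq₂2 : 2 < q₂)
    (hN : N = (2 * q₁ + 1) * (2 * q₂ + 1)) :
    Nat.card {a : (ZMod N)ˣ // Even (orderOf a) ∧ a ^ (orderOf a / 2) = -1} = q₁ * q₂ ∧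
    4 * Nat.card {a : (ZMod N)ˣ // Even (orderOf a) ∧ a ^ (orderOf a / 2) = -1}
      = Nat.totient N := by
  subst hN
  set p₁ := 2 * q₁ + 1 with hp₁def
  set p₂ := 2 * q₂ + 1 with hp₂def
  have hcop : Nat.Coprime p₁ p₂ :=
    (Nat.coprime_primes hp₁ hp₂).mpr (by omega)
  have hNlarge : 2 < p₁ * p₂ := by
    have : 7 * 7 ≤ p₁ * p₂ := Nat.mul_le_mul (by omega) (by omega)
    omega
  haveI : Fact (2 < p₁ * p₂) := ⟨hNlarge⟩
  haveI : NeZero (p₁ * p₂) := ⟨by omega⟩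
  haveI : Fact p₁.Prime := ⟨hp₁⟩
  haveI : Fact p₂.Prime := ⟨hp₂⟩
  set m := q₁ * q₂ with hmdef
  have hm_odd : Odd m := (hq₁.odd_of_ne_two (by omega)).mul (hq₂.odd_of_ne_two (by omega))
  -- the CRT equivalence on units
  let e : (ZMod (p₁ * p₂))ˣ ≃* (ZMod p₁)ˣ × (ZMod p₂)ˣ :=
    (Units.mapEquiv (ZMod.chineseRemainder hcop).toMulEquiv).trans MulEquiv.prodUnits
  have he : e (-1) = -1 := by
    apply Prod.ext <;> apply Units.ext <;>
      simp only [e, MulEquiv.trans_apply, MulEquiv.prodUnits, MulEquiv.coe_mk, Equiv.coe_fn_mk,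
        MonoidHom.prod_apply, Units.coe_map, MonoidHom.coe_fst, MonoidHom.coe_snd,
        Units.coe_mapEquiv, RingEquiv.coe_toMulEquiv, RingEquiv.coe_toEquiv, RingEquiv.toEquiv_eq_coe, MulEquiv.coe_toEquiv, MulEquiv.toEquiv_eq_coe, Units.val_neg, Units.val_one,
        map_neg, map_one, Prod.fst_neg, Prod.snd_neg, Prod.fst_one, Prod.snd_one]
  have h2m : ∀ a : (ZMod (p₁ * p₂))ˣ, a ^ (2 * m) = 1 := by
    intro a
    apply e.injective
    rw [map_pow, map_one]
    apply Prod.ext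
    · show ((e a) ^ (2 * m)).1 = (1 : (ZMod p₁)ˣ × (ZMod p₂)ˣ).1
      rw [Prod.pow_fst]
      have : 2 * m = (p₁ - 1) * q₂ := by
        have h : p₁ - 1 = 2 * q₁ := by omega
        rw [hmdef, h]; ring
      rw [this, pow_mul, ZMod.units_pow_card_sub_one_eq_one, one_pow]
      rfl
    · show ((e a) ^ (2 * m)).2 = (1 : (ZMod p₁)ˣ × (ZMod p₂)ˣ).2
      rw [Prod.pow_snd]
      have : 2 * m = (p₂ - 1) * q₁ := by
        have h : p₂ - 1 = 2 * q₂ := by omega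
        rw [hmdef, h]; ring
      rw [this, pow_mul, ZMod.units_pow_card_sub_one_eq_one, one_pow]
      rfl
  have hj1 : (-1 : (ZMod (p₁ * p₂))ˣ) ≠ 1 := by
    intro h
    apply ZMod.neg_one_ne_one (n := p₁ * p₂)
    have := congrArg Units.val h
    simpa using this
  have hj2 : (-1 : (ZMod (p₁ * p₂))ˣ) ^ 2 = 1 := by simp
  -- rewrite the condition
  have key : Nat.card {a : (ZMod (p₁ * p₂))ˣ //
      Even (orderOf a) ∧ a ^ (orderOf a / 2) = -1} = q₁ * q₂ := by
    have e2 : {a : (ZMod (p₁ * p₂))ˣ // Even (orderOf a) ∧ a ^ (orderOf a / 2) = -1}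
        ≃ {a : (ZMod (p₁ * p₂))ˣ // a ^ m = -1} :=
      Equiv.subtypeEquivRight fun a => halforder_iff_aux _ a hj2 hj1 m hm_odd (h2m a)
    have e3 : {a : (ZMod (p₁ * p₂))ˣ // a ^ m = -1}
        ≃ {z : (ZMod p₁)ˣ × (ZMod p₂)ˣ // z ^ m = -1} := by
      refine Equiv.subtypeEquiv e.toEquiv fun a => ?_
      constructor
      · intro h
        show e a ^ m = -1
        rw [← map_pow, h, he]
      · intro h
        apply e.injective
        rw [map_pow, he]
        exact h
    have e4 : {z : (ZMod p₁)ˣ × (ZMod p₂)ˣ // z ^ m = -1}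
        ≃ {x : (ZMod p₁)ˣ // x ^ m = -1} × {y : (ZMod p₂)ˣ // y ^ m = -1} := by
      refine (Equiv.subtypeEquivRight fun z => ?_).trans (Equiv.subtypeProdEquivProd)
      constructor
      · intro h
        constructor
        · have := congrArg Prod.fst h
          rwa [Prod.pow_fst] at this
        · have := congrArg Prod.snd h
          rwa [Prod.pow_snd] at this
      · intro ⟨h1, h2⟩
        apply Prod.ext
        · rw [Prod.pow_fst]; exact h1
        · rw [Prod.pow_snd]; exact h2
    have hcount1 : 2 * Nat.card {x : (ZMod p₁)ˣ // x ^ m = -1} = p₁ - 1 := by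
      apply count_pow_eq_neg_one_aux p₁ m hp₁ (by omega)
      · refine ⟨q₂, ?_⟩
        have h : p₁ - 1 = 2 * q₁ := by omega
        rw [hmdef, h]; ring
      · intro h
        have h2 : 2 ∣ m := dvd_trans ⟨q₁, by omega⟩ h
        rw [Nat.odd_iff] at hm_odd
        omega
    have hcount2 : 2 * Nat.card {y : (ZMod p₂)ˣ // y ^ m = -1} = p₂ - 1 := by
      apply count_pow_eq_neg_one_aux p₂ m hp₂ (by omega)
      · refine ⟨q₁, ?_⟩
        have h : p₂ - 1 = 2 * q₂ := by omega
        rw [hmdef, h]; ring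
      · intro h
        have h2 : 2 ∣ m := dvd_trans ⟨q₂, by omega⟩ h
        rw [Nat.odd_iff] at hm_odd
        omega
    have hx : Nat.card {x : (ZMod p₁)ˣ // x ^ m = -1} = q₁ := by omega
    have hy : Nat.card {y : (ZMod p₂)ˣ // y ^ m = -1} = q₂ := by omega
    rw [Nat.card_congr (e2.trans (e3.trans e4)), Nat.card_prod, hx, hy]
  refine ⟨key, ?_⟩
  rw [key, Nat.totient_mul hcop, Nat.totient_prime hp₁, Nat.totient_prime hp₂]
  have : p₁ - 1 = 2 * q₁ := by omega
  have h2 : p₂ - 1 = 2 * q₂ := by omega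
  rw [this, h2]
  ring
end

section
/- Let N = (2q₁+1)(2q₂+1) be a safe semiprime with q₁, q₂ distinct primes greater than 2. Then exactly 2·q₁·q₂ of the 4·q₁·q₂ units a modulo N satisfy: the order r of a is even and a^{r/2} is not congruent to −1 modulo N (i.e., Shor's classical post-processing succeeds for exactly half of all units). -/
open Finset

-- count of d-th roots of unity in a cyclic group
lemma shor_aux_card_pow_eq_one {G : Type*} [Group G] [Fintype G] [IsCyclic G] [DecidableEq G]
    {d : ℕ} (hd0 : 0 < d) (hd : d ∣ Fintype.card G) :
    (Finset.univ.filter (fun x : G => x ^ d = 1)).card = d := by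
  classical
  refine le_antisymm (IsCyclic.card_pow_eq_one_le hd0) ?_
  obtain ⟨g, hg⟩ := IsCyclic.exists_generator (α := G)
  have hog : orderOf g = Fintype.card G := by
    rw [orderOf_eq_card_of_forall_mem_zpowers hg, Nat.card_eq_fintype_card]
  have hcard0 : Fintype.card G ≠ 0 := Fintype.card_ne_zero
  set a := g ^ (Fintype.card G / d) with ha_def
  have ha : orderOf a = d := by
    rw [ha_def, orderOf_pow, hog, Nat.gcd_eq_right (Nat.div_dvd_of_dvd hd),
      Nat.div_div_self hd hcard0]
  have hsub : (Subgroup.zpowers a : Set G).toFinset ⊆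
      Finset.univ.filter (fun x : G => x ^ d = 1) := by
    intro x hx
    rw [Set.mem_toFinset] at hx
    rw [Finset.mem_filter]
    refine ⟨Finset.mem_univ _, ?_⟩
    have : orderOf x ∣ d := ha ▸ orderOf_dvd_of_mem_zpowers hx
    exact orderOf_dvd_iff_pow_eq_one.mp this
  calc d = Fintype.card (Subgroup.zpowers a) := by rw [Fintype.card_zpowers, ha]
    _ = (Subgroup.zpowers a : Set G).toFinset.card := (Set.toFinset_card _).symm
    _ ≤ _ := Finset.card_le_card hsub

lemma shor_aux_pow_half {p : ℕ} [Fact p.Prime] (hp2 : 2 < p) (x : (ZMod p)ˣ) {r : ℕ}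
    (hr : Even r) (h4 : ¬ (4 ∣ r)) (hdvd : orderOf x ∣ r) :
    x ^ (r / 2) = -1 ↔ Even (orderOf x) := by
  haveI : Fact (2 < p) := ⟨hp2⟩
  have hne : (-1 : (ZMod p)ˣ) ≠ 1 := by
    intro h
    have h' := congrArg Units.val h
    rw [Units.val_neg, Units.val_one] at h'
    exact ZMod.neg_one_ne_one h'
  have hrr : r / 2 * 2 = r := Nat.div_mul_cancel hr.two_dvd
  constructor
  · intro h
    by_contra hodd
    rw [Nat.not_even_iff_odd] at hodd
    have h2 : orderOf x ∣ r / 2 := by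
      have hcop : (orderOf x).Coprime 2 := hodd.coprime_two_right
      exact (Nat.Coprime.dvd_of_dvd_mul_right hcop (by rw [hrr]; exact hdvd))
    have h1 : x ^ (r / 2) = 1 := orderOf_dvd_iff_pow_eq_one.mp h2
    rw [h] at h1
    exact hne h1
  · intro heven
    have hr2odd : Odd (r / 2) := by
      rcases Nat.even_or_odd (r / 2) with he | ho
      · exfalso
        apply h4
        obtain ⟨c, hc⟩ := he
        omega
      · exact ho
    have hne1 : x ^ (r / 2) ≠ 1 := by
      intro h1
      have hd : orderOf x ∣ r / 2 := orderOf_dvd_iff_pow_eq_one.mpr h1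
      have : (2 : ℕ) ∣ r / 2 := dvd_trans heven.two_dvd hd
      rw [Nat.odd_iff] at hr2odd
      omega
    have hsq : ((x ^ (r / 2) : (ZMod p)ˣ) : ZMod p) * ((x ^ (r / 2) : (ZMod p)ˣ) : ZMod p) = 1 := by
      have h1 : (x ^ (r / 2)) * (x ^ (r / 2)) = 1 := by
        rw [← pow_add]
        have : r / 2 + r / 2 = r := by omega
        rw [this]
        exact orderOf_dvd_iff_pow_eq_one.mp hdvd
      have := congrArg Units.val h1
      rwa [Units.val_mul, Units.val_one] at this
    rcases mul_self_eq_one_iff.mp hsq with h1 | hm1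
    · exact absurd (Units.ext h1) hne1
    · apply Units.ext
      rw [hm1, Units.val_neg, Units.val_one]

lemma shor_aux_card_odd_order (q : ℕ) (hq : q.Prime) (hp : (2 * q + 1).Prime) (hq2 : 2 < q)
    [DecidablePred fun x : (ZMod (2 * q + 1))ˣ => Even (orderOf x)] :
    (Finset.univ.filter (fun x : (ZMod (2 * q + 1))ˣ => ¬ Even (orderOf x))).card = q ∧
    (Finset.univ.filter (fun x : (ZMod (2 * q + 1))ˣ => Even (orderOf x))).card = q := by
  classical
  haveI : Fact (2 * q + 1).Prime := ⟨hp⟩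
  have hcard : Fintype.card (ZMod (2 * q + 1))ˣ = 2 * q := by
    rw [ZMod.card_units]
    omega
  have hqodd : Odd q := hq.odd_of_ne_two (by omega)
  have key : ∀ x : (ZMod (2 * q + 1))ˣ, (¬ Even (orderOf x)) ↔ x ^ q = 1 := by
    intro x
    rw [Nat.not_even_iff_odd, ← orderOf_dvd_iff_pow_eq_one]
    constructor
    · intro hodd
      have h1 : orderOf x ∣ Fintype.card (ZMod (2 * q + 1))ˣ := orderOf_dvd_card
      rw [hcard] at h1
      exact Nat.Coprime.dvd_of_dvd_mul_left hodd.coprime_two_right h1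
    · intro hdvd
      rcases Nat.even_or_odd (orderOf x) with he | ho
      · exfalso
        have h2 : (2 : ℕ) ∣ q := dvd_trans he.two_dvd hdvd
        rw [Nat.odd_iff] at hqodd
        omega
      · exact ho
  have hodd_card : (Finset.univ.filter
      (fun x : (ZMod (2 * q + 1))ˣ => ¬ Even (orderOf x))).card = q := by
    have heq : (Finset.univ.filter (fun x : (ZMod (2 * q + 1))ˣ => ¬ Even (orderOf x)))
        = Finset.univ.filter (fun x : (ZMod (2 * q + 1))ˣ => x ^ q = 1) := by
      apply Finset.filter_congr
      intro x _
      exact key x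
    rw [heq]
    exact shor_aux_card_pow_eq_one (by omega) (by rw [hcard]; exact ⟨2, by ring⟩)
  refine ⟨hodd_card, ?_⟩
  have htot := Finset.card_filter_add_card_filter_not
    (s := (Finset.univ : Finset (ZMod (2 * q + 1))ˣ))
    (p := fun x => Even (orderOf x))
  rw [Finset.card_univ, hcard] at htot
  omega

lemma shor_aux_count_xor {G₁ G₂ : Type*} [Monoid G₁] [Monoid G₂] [Fintype G₁] [Fintype G₂]
    {q₁ q₂ : ℕ}
    [d₁ : DecidablePred (fun x : G₁ => Even (orderOf x))]
    [d₂ : DecidablePred (fun y : G₂ => Even (orderOf y))]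
    (he₁ : (Finset.univ.filter fun x : G₁ => Even (orderOf x)).card = q₁)
    (ho₁ : (Finset.univ.filter fun x : G₁ => ¬ Even (orderOf x)).card = q₁)
    (he₂ : (Finset.univ.filter fun y : G₂ => Even (orderOf y)).card = q₂)
    (ho₂ : (Finset.univ.filter fun y : G₂ => ¬ Even (orderOf y)).card = q₂) :
    Nat.card {b : G₁ × G₂ // Even (orderOf b.1) ↔ ¬ Even (orderOf b.2)} = 2 * q₁ * q₂ := by
  classical
  rw [Nat.card_eq_fintype_card, Fintype.card_subtype]
  have hfilter : (Finset.univ.filter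
        (fun b : G₁ × G₂ => Even (orderOf b.1) ↔ ¬ Even (orderOf b.2)))
      = Finset.univ.filter (fun b : G₁ × G₂ =>
          (Even (orderOf b.1) ∧ ¬ Even (orderOf b.2)) ∨
          (¬ Even (orderOf b.1) ∧ Even (orderOf b.2))) := by
    apply Finset.filter_congr
    intro b _
    constructor
    · intro h
      by_cases h1 : Even (orderOf b.1)
      · exact Or.inl ⟨h1, h.mp h1⟩
      · by_cases h2 : Even (orderOf b.2)
        · exact Or.inr ⟨h1, h2⟩
        · exact absurd (h.mpr h2) h1
    · rintro (⟨h1, h2⟩ | ⟨h1, h2⟩)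
      · exact ⟨fun _ => h2, fun _ => h1⟩
      · exact ⟨fun h => absurd h h1, fun h => absurd h2 h⟩
  rw [hfilter, Finset.filter_or]
  rw [Finset.card_union_of_disjoint (by
    rw [Finset.disjoint_left]
    intro b hb1 hb2
    rw [Finset.mem_filter] at hb1 hb2
    exact hb2.2.1 hb1.2.1)]
  have hpc1 : (Finset.univ.filter (fun b : G₁ × G₂ =>
      Even (orderOf b.1) ∧ ¬ Even (orderOf b.2))).card = q₁ * q₂ := by
    rw [← Finset.univ_product_univ,
      Finset.filter_product (fun x : G₁ => Even (orderOf x))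
        (fun y : G₂ => ¬ Even (orderOf y)),
      Finset.card_product, he₁, ho₂]
  have hpc2 : (Finset.univ.filter (fun b : G₁ × G₂ =>
      ¬ Even (orderOf b.1) ∧ Even (orderOf b.2))).card = q₁ * q₂ := by
    rw [← Finset.univ_product_univ,
      Finset.filter_product (fun x : G₁ => ¬ Even (orderOf x))
        (fun y : G₂ => Even (orderOf y)),
      Finset.card_product, ho₁, he₂]
  rw [hpc1, hpc2]
  ring

lemma shor_aux_prod_count (q₁ q₂ : ℕ) (hq₁ : q₁.Prime) (hq₂ : q₂.Prime)
    (hp₁ : (2 * q₁ + 1).Prime) (hp₂ : (2 * q₂ + 1).Prime)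
    (hq₁2 : 2 < q₁) (hq₂2 : 2 < q₂) :
    Nat.card {b : (ZMod (2 * q₁ + 1))ˣ × (ZMod (2 * q₂ + 1))ˣ //
        Even (orderOf b) ∧ b ^ (orderOf b / 2) ≠ -1} = 2 * q₁ * q₂ := by
  classical
  haveI : Fact (2 * q₁ + 1).Prime := ⟨hp₁⟩
  haveI : Fact (2 * q₂ + 1).Prime := ⟨hp₂⟩
  have hcard₁ : Fintype.card (ZMod (2 * q₁ + 1))ˣ = 2 * q₁ := by
    rw [ZMod.card_units]; omega
  have hcard₂ : Fintype.card (ZMod (2 * q₂ + 1))ˣ = 2 * q₂ := by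
    rw [ZMod.card_units]; omega
  have key : ∀ b : (ZMod (2 * q₁ + 1))ˣ × (ZMod (2 * q₂ + 1))ˣ,
      (Even (orderOf b) ∧ b ^ (orderOf b / 2) ≠ -1) ↔
      (Even (orderOf b.1) ↔ ¬ Even (orderOf b.2)) := by
    intro b
    have hb : orderOf b = Nat.lcm (orderOf b.1) (orderOf b.2) := Prod.orderOf b
    have hd₁ : orderOf b.1 ∣ 2 * q₁ := by
      have := orderOf_dvd_card (x := b.1); rwa [hcard₁] at this
    have hd₂ : orderOf b.2 ∣ 2 * q₂ := by
      have := orderOf_dvd_card (x := b.2); rwa [hcard₂] at this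
    have hdvd₁ : orderOf b.1 ∣ orderOf b := by rw [hb]; exact Nat.dvd_lcm_left _ _
    have hdvd₂ : orderOf b.2 ∣ orderOf b := by rw [hb]; exact Nat.dvd_lcm_right _ _
    have hlcm : orderOf b ∣ 2 * (q₁ * q₂) := by
      rw [hb]
      exact Nat.lcm_dvd (hd₁.trans ⟨q₂, by ring⟩) (hd₂.trans ⟨q₁, by ring⟩)
    have hq₁o : ¬ (2 ∣ q₁) := by
      have := hq₁.odd_of_ne_two (by omega); rw [Nat.odd_iff] at this; omega
    have hq₂o : ¬ (2 ∣ q₂) := by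
      have := hq₂.odd_of_ne_two (by omega); rw [Nat.odd_iff] at this; omega
    have h4 : ¬ (4 ∣ orderOf b) := by
      intro h
      have h' : (4 : ℕ) ∣ 2 * (q₁ * q₂) := h.trans hlcm
      have h2' : (2 : ℕ) ∣ q₁ * q₂ := by omega
      rcases (Nat.prime_two.dvd_mul).mp h2' with h | h
      · exact hq₁o h
      · exact hq₂o h
    have hlm : orderOf b ∣ (orderOf b.1) * (orderOf b.2) := by
      rw [hb]; exact Nat.lcm_dvd_mul _ _
    have heven : Even (orderOf b) ↔ (Even (orderOf b.1) ∨ Even (orderOf b.2)) := by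
      constructor
      · intro h
        have h2' : (2 : ℕ) ∣ (orderOf b.1) * (orderOf b.2) := h.two_dvd.trans hlm
        rcases (Nat.prime_two.dvd_mul).mp h2' with h' | h'
        · exact Or.inl (Nat.even_iff.mpr (by omega))
        · exact Or.inr (Nat.even_iff.mpr (by omega))
      · rintro (h | h)
        · have := h.two_dvd.trans hdvd₁
          exact Nat.even_iff.mpr (by omega)
        · have := h.two_dvd.trans hdvd₂
          exact Nat.even_iff.mpr (by omega)
    constructor
    · rintro ⟨he, hne'⟩
      have hiff₁ : b.1 ^ (orderOf b / 2) = -1 ↔ Even (orderOf b.1) :=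
        shor_aux_pow_half (by omega) b.1 he h4 hdvd₁
      have hiff₂ : b.2 ^ (orderOf b / 2) = -1 ↔ Even (orderOf b.2) :=
        shor_aux_pow_half (by omega) b.2 he h4 hdvd₂
      have hne2 : ¬ (Even (orderOf b.1) ∧ Even (orderOf b.2)) := by
        rintro ⟨ha1, ha2⟩
        apply hne'
        have hbp : b ^ (orderOf b / 2) = (b.1 ^ (orderOf b / 2), b.2 ^ (orderOf b / 2)) := rfl
        rw [hbp, hiff₁.mpr ha1, hiff₂.mpr ha2]
        rfl
      have hor := heven.mp he
      constructor
      · intro ha1 ha2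
        exact hne2 ⟨ha1, ha2⟩
      · intro ha1
        rcases hor with h | h
        · exact h
        · exact absurd h ha1
    · intro hx
      have he : Even (orderOf b) := by
        refine heven.mpr ?_
        by_cases h : Even (orderOf b.2)
        · exact Or.inr h
        · exact Or.inl (hx.mpr h)
      have hiff₁ : b.1 ^ (orderOf b / 2) = -1 ↔ Even (orderOf b.1) :=
        shor_aux_pow_half (by omega) b.1 he h4 hdvd₁
      have hiff₂ : b.2 ^ (orderOf b / 2) = -1 ↔ Even (orderOf b.2) :=
        shor_aux_pow_half (by omega) b.2 he h4 hdvd₂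
      refine ⟨he, fun h => ?_⟩
      have ha1 : b.1 ^ (orderOf b / 2) = -1 := by
        have := congrArg Prod.fst h; simpa using this
      have ha2 : b.2 ^ (orderOf b / 2) = -1 := by
        have := congrArg Prod.snd h; simpa using this
      exact (hx.mp (hiff₁.mp ha1)) (hiff₂.mp ha2)
  have htrans : Nat.card {b : (ZMod (2 * q₁ + 1))ˣ × (ZMod (2 * q₂ + 1))ˣ //
        Even (orderOf b) ∧ b ^ (orderOf b / 2) ≠ -1}
      = Nat.card {b : (ZMod (2 * q₁ + 1))ˣ × (ZMod (2 * q₂ + 1))ˣ //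
        Even (orderOf b.1) ↔ ¬ Even (orderOf b.2)} :=
    Nat.card_congr (Equiv.subtypeEquiv (Equiv.refl _) (fun b => key b))
  rw [htrans]
  obtain ⟨ho₁, he₁⟩ := shor_aux_card_odd_order q₁ hq₁ hp₁ hq₁2
  obtain ⟨ho₂, he₂⟩ := shor_aux_card_odd_order q₂ hq₂ hp₂ hq₂2
  exact shor_aux_count_xor he₁ ho₁ he₂ ho₂

theorem shor_success_count_mod_safe_semiprime
    (q₁ q₂ N : ℕ) (hq₁ : q₁.Prime) (hq₂ : q₂.Prime)
    (hp₁ : (2 * q₁ + 1).Prime) (hp₂ : (2 * q₂ + 1).Prime)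
    (hne : q₁ ≠ q₂) (hq₁2 : 2 < q₁) (hq₂2 : 2 < q₂)
    (hN : N = (2 * q₁ + 1) * (2 * q₂ + 1)) :
    Nat.card {a : (ZMod N)ˣ // Even (orderOf a) ∧ a ^ (orderOf a / 2) ≠ -1}
      = 2 * q₁ * q₂ := by
  subst hN
  have hcop : Nat.Coprime (2 * q₁ + 1) (2 * q₂ + 1) :=
    (Nat.coprime_primes hp₁ hp₂).mpr (by omega)
  haveI : NeZero ((2 * q₁ + 1) * (2 * q₂ + 1)) := ⟨by positivity⟩
  let c : ZMod ((2 * q₁ + 1) * (2 * q₂ + 1)) ≃+*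
      ZMod (2 * q₁ + 1) × ZMod (2 * q₂ + 1) := ZMod.chineseRemainder hcop
  let f : (ZMod ((2 * q₁ + 1) * (2 * q₂ + 1)))ˣ ≃*
      (ZMod (2 * q₁ + 1))ˣ × (ZMod (2 * q₂ + 1))ˣ :=
    (Units.mapEquiv c.toMulEquiv).trans MulEquiv.prodUnits
  have hford : ∀ a, orderOf (f a) = orderOf a :=
    fun a => orderOf_injective f.toMonoidHom f.injective a
  have h1 : Units.mapEquiv c.toMulEquiv (-1) = -1 := by
    apply Units.ext
    rw [Units.coe_mapEquiv, Units.val_neg, Units.val_one, Units.val_neg, Units.val_one]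
    show c (-1) = -1
    rw [map_neg, map_one]
  have h2 : (MulEquiv.prodUnits
      (M := ZMod (2 * q₁ + 1)) (N := ZMod (2 * q₂ + 1))) (-1) = -1 := by
    apply Prod.ext
    · apply Units.ext
      show ((Units.map (MonoidHom.fst (ZMod (2 * q₁ + 1)) (ZMod (2 * q₂ + 1))) (-1)
        : (ZMod (2 * q₁ + 1))ˣ) : ZMod (2 * q₁ + 1))
        = (((-1 : (ZMod (2 * q₁ + 1))ˣ × (ZMod (2 * q₂ + 1))ˣ).1 :
          (ZMod (2 * q₁ + 1))ˣ) : ZMod (2 * q₁ + 1))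
      rw [Units.coe_map]
      simp
    · apply Units.ext
      show ((Units.map (MonoidHom.snd (ZMod (2 * q₁ + 1)) (ZMod (2 * q₂ + 1))) (-1)
        : (ZMod (2 * q₂ + 1))ˣ) : ZMod (2 * q₂ + 1))
        = (((-1 : (ZMod (2 * q₁ + 1))ˣ × (ZMod (2 * q₂ + 1))ˣ).2 :
          (ZMod (2 * q₂ + 1))ˣ) : ZMod (2 * q₂ + 1))
      rw [Units.coe_map]
      simp
  have hfneg : f (-1) = -1 := by
    show MulEquiv.prodUnits (Units.mapEquiv c.toMulEquiv (-1)) = -1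
    rw [h1, h2]
  have step1 : Nat.card {a : (ZMod ((2 * q₁ + 1) * (2 * q₂ + 1)))ˣ //
        Even (orderOf a) ∧ a ^ (orderOf a / 2) ≠ -1}
      = Nat.card {b : (ZMod (2 * q₁ + 1))ˣ × (ZMod (2 * q₂ + 1))ˣ //
        Even (orderOf b) ∧ b ^ (orderOf b / 2) ≠ -1} := by
    apply Nat.card_congr
    refine Equiv.subtypeEquiv f.toEquiv (fun a => ?_)
    simp only [MulEquiv.toEquiv_eq_coe, MulEquiv.coe_toEquiv]
    have h1' : orderOf (f a) = orderOf a := hford a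
    have h2' : (f a) ^ (orderOf a / 2) = f (a ^ (orderOf a / 2)) := (map_pow f a _).symm
    rw [h1', h2']
    have h3 : f (a ^ (orderOf a / 2)) = -1 ↔ a ^ (orderOf a / 2) = -1 := by
      rw [← hfneg]
      exact ⟨fun h => f.injective h, fun h => by rw [h]⟩
    constructor
    · rintro ⟨he, hne'⟩
      exact ⟨he, fun h => hne' (h3.mp h)⟩
    · rintro ⟨he, hne'⟩
      exact ⟨he, fun h => hne' (h3.mpr h)⟩
  rw [step1]
  exact shor_aux_prod_count q₁ q₂ hq₁ hq₂ hp₁ hp₂ hq₁2 hq₂2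
end

section
/- Let N be odd and composite, a a unit modulo N with even multiplicative order r, and suppose a^{r/2} is not congruent to −1 and not congruent to 1 modulo N. Then gcd(a^{r/2} − 1, N) is a nontrivial divisor of N (i.e., 1 < gcd(a^{r/2} − 1, N) < N). -/
theorem shor_gcd_nontrivial
    (N a : ℕ) (hN1 : 1 < N) (hodd : Odd N) (hcomp : ¬ N.Prime)
    (hcop : Nat.Coprime a N)
    (r : ℕ) (hr : r = orderOf (a : ZMod N)) (hre : Even r)
    (h1 : (a : ZMod N) ^ (r / 2) ≠ 1) (hm1 : (a : ZMod N) ^ (r / 2) ≠ -1) :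
    1 < Nat.gcd (a ^ (r / 2) - 1) N ∧ Nat.gcd (a ^ (r / 2) - 1) N < N := by
  have hN0 : 0 < N := by omega
  set m : ℕ := a ^ (r / 2) with hm
  have ha1 : 1 ≤ a := by
    rcases Nat.eq_zero_or_pos a with h | h
    · exfalso; rw [h] at hcop
      simp [Nat.Coprime] at hcop; omega
    · exact h
  have hm1' : 1 ≤ m := Nat.one_le_pow _ _ ha1
  have hcast : ((m : ℕ) : ZMod N) = (a : ZMod N) ^ (r / 2) := by push_cast [hm]; ring
  -- N divides m^2 - 1
  have hsq : (a : ZMod N) ^ (r / 2) * (a : ZMod N) ^ (r / 2) = 1 := by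
    rw [← pow_add]
    have : r / 2 + r / 2 = r := by
      obtain ⟨k, hk⟩ := hre; omega
    rw [this, hr, pow_orderOf_eq_one]
  have hdvd : N ∣ (m - 1) * (m + 1) := by
    have hfact : (m - 1) * (m + 1) = m * m - 1 := by
      cases m with
      | zero => omega
      | succ k =>
        have : (k + 1) * (k + 1) = k * k + 2 * k + 1 := by ring
        have h2 : k * (k + 1 + 1) = k * k + 2 * k := by ring
        simp only [Nat.succ_sub_one]
        omega
    rw [hfact]
    have : ((m * m - 1 : ℕ) : ZMod N) = 0 := by
      have h1 : 1 ≤ m * m := Nat.one_le_iff_ne_zero.mpr (by positivity)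
      push_cast [Nat.cast_sub h1]
      rw [hcast, hsq]; ring
    exact (ZMod.natCast_eq_zero_iff _ _).mp this
  -- gcd < N : N does not divide m - 1
  have hnd1 : ¬ N ∣ (m - 1) := by
    intro h
    apply h1
    have : ((m - 1 : ℕ) : ZMod N) = 0 := (ZMod.natCast_eq_zero_iff _ _).mpr h
    rw [Nat.cast_sub hm1'] at this
    rw [← hcast]
    push_cast at this ⊢
    linear_combination this
  -- gcd > 1 : otherwise N ∣ m + 1
  have hg1 : 1 < Nat.gcd (m - 1) N := by
    rcases Nat.lt_or_ge 1 (Nat.gcd (m - 1) N) with h | h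
    · exact h
    · exfalso
      have hg0 : Nat.gcd (m - 1) N ≠ 0 := by
        intro h0
        have := Nat.eq_zero_of_gcd_eq_zero_right h0; omega
      have hco : Nat.Coprime (m - 1) N := by
        unfold Nat.Coprime; omega
      have : N ∣ (m + 1) := (Nat.Coprime.dvd_of_dvd_mul_left hco.symm hdvd)
      apply hm1
      have : ((m + 1 : ℕ) : ZMod N) = 0 := (ZMod.natCast_eq_zero_iff _ _).mpr this
      push_cast at this
      rw [← hcast]
      linear_combination this
  refine ⟨hg1, ?_⟩
  have hgdvd : Nat.gcd (m - 1) N ∣ N := Nat.gcd_dvd_right _ _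
  rcases (Nat.lt_or_ge (Nat.gcd (m - 1) N) N) with h | h
  · exact h
  · exfalso
    have : Nat.gcd (m - 1) N = N := Nat.le_antisymm (Nat.le_of_dvd hN0 hgdvd) h
    exact hnd1 (this ▸ Nat.gcd_dvd_left _ _)
end

section
/- Let N = (2q₁+1)(2q₂+1) be a safe semiprime with q₁ ≠ q₂ primes greater than 2, and let r = ord_N(2). The number of integers t with 1 ≤ t ≤ r such that r/gcd(t, r) ∈ {1, 2} equals r/(q₁q₂); hence a uniformly random such t yields d = r/gcd(t,r) ∉ {1,2} with probability 1 − 1/(q₁q₂). -/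
-- order of 2 mod a safe prime p = 2q+1 (q odd prime): q ∣ ord and ord ∣ 2q
lemma ord2_safe (q : ℕ) (hq : q.Prime) (hq2 : 2 < q) (hp : (2*q+1).Prime) :
    q ∣ orderOf (2 : ZMod (2*q+1)) ∧ orderOf (2 : ZMod (2*q+1)) ∣ 2*q := by
  haveI := Fact.mk hp
  have hq1 : 3 ≤ q := hq2
  have h2ne : (2 : ZMod (2*q+1)) ≠ 0 := by
    intro h
    have : ((2:ℕ) : ZMod (2*q+1)) = 0 := by push_cast; exact h
    have hdvd : (2*q+1) ∣ 2 := (ZMod.natCast_eq_zero_iff 2 (2*q+1)).mp this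
    have := Nat.le_of_dvd (by norm_num) hdvd
    omega
  have hdvd2q : orderOf (2 : ZMod (2*q+1)) ∣ 2*q := by
    have := ZMod.pow_card_sub_one_eq_one h2ne
    have h' : (2 : ZMod (2*q+1)) ^ (2*q) = 1 := by
      simpa using this
    exact orderOf_dvd_of_pow_eq_one h'
  refine ⟨?_, hdvd2q⟩
  by_contra hnd
  have hcop : Nat.Coprime (orderOf (2 : ZMod (2*q+1))) q :=
    ((hq.coprime_iff_not_dvd).mpr hnd).symm
  have hd2 : orderOf (2 : ZMod (2*q+1)) ∣ 2 := hcop.dvd_of_dvd_mul_right hdvd2q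
  have h4 : (2 : ZMod (2*q+1)) ^ 2 = 1 := orderOf_dvd_iff_pow_eq_one.mp hd2
  have h4' : ((4:ℕ) : ZMod (2*q+1)) = ((1:ℕ) : ZMod (2*q+1)) := by push_cast; linear_combination h4
  have hmod : (4 : ℕ) ≡ 1 [MOD 2*q+1] := (ZMod.natCast_eq_natCast_iff _ _ _).mp h4'
  have hdvd3 : (2*q+1) ∣ 3 := by
    have := (Nat.modEq_iff_dvd' (by norm_num)).mp hmod.symm
    simpa using this
  have := Nat.le_of_dvd (by norm_num) hdvd3
  omega

theorem qofa_bad_output_count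
    (q₁ q₂ N : ℕ) (hq₁ : q₁.Prime) (hq₂ : q₂.Prime)
    (hp₁ : (2 * q₁ + 1).Prime) (hp₂ : (2 * q₂ + 1).Prime)
    (hne : q₁ ≠ q₂) (hq₁2 : 2 < q₁) (hq₂2 : 2 < q₂)
    (hN : N = (2 * q₁ + 1) * (2 * q₂ + 1))
    (r : ℕ) (hr : r = orderOf (2 : ZMod N)) :
    ((Finset.Icc 1 r).filter
        (fun t => r / Nat.gcd t r = 1 ∨ r / Nat.gcd t r = 2)).card = r / (q₁ * q₂) ∧
    ((Finset.Icc 1 r).filter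
        (fun t => r / Nat.gcd t r ≠ 1 ∧ r / Nat.gcd t r ≠ 2)).card
      = r - r / (q₁ * q₂) := by
  -- notation
  set p₁ := 2 * q₁ + 1 with hp₁def
  set p₂ := 2 * q₂ + 1 with hp₂def
  have hpne : p₁ ≠ p₂ := by simp only [hp₁def, hp₂def]; omega
  have hpcop : Nat.Coprime p₁ p₂ := (Nat.coprime_primes hp₁ hp₂).mpr hpne
  have hqcop : Nat.Coprime q₁ q₂ := (Nat.coprime_primes hq₁ hq₂).mpr hne
  -- orders mod p₁ p₂ divide r
  have hpowN : (2 : ZMod N) ^ r = 1 := hr ▸ pow_orderOf_eq_one _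
  have hcast : ∀ p : ℕ, p ∣ N → (2 : ZMod p) ^ r = 1 := by
    intro p hpd
    have := congrArg (ZMod.castHom hpd (ZMod p)) hpowN
    rw [map_pow, map_one, map_ofNat] at this
    exact this
  have hord1 := ord2_safe q₁ hq₁ hq₁2 hp₁
  have hord2 := ord2_safe q₂ hq₂ hq₂2 hp₂
  have hq₁r : q₁ ∣ r := hord1.1.trans
    (orderOf_dvd_of_pow_eq_one (hcast p₁ ⟨p₂, hN⟩))
  have hq₂r : q₂ ∣ r := hord2.1.trans
    (orderOf_dvd_of_pow_eq_one (hcast p₂ ⟨p₁, by rw [hN]; ring⟩))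
  have hmr : q₁ * q₂ ∣ r := hqcop.mul_dvd_of_dvd_of_dvd hq₁r hq₂r
  -- r ∣ 2 q₁ q₂
  have hE : ∀ (q : ℕ), orderOf (2 : ZMod (2*q+1)) ∣ 2*q →
      q ∣ q₁ * q₂ → (2*q+1) ∣ 2 ^ (2 * (q₁ * q₂)) - 1 := by
    intro q hdvd hqd
    have h1 : (2 : ZMod (2*q+1)) ^ (2 * (q₁ * q₂)) = 1 := by
      apply orderOf_dvd_iff_pow_eq_one.mp
      exact hdvd.trans (mul_dvd_mul_left 2 hqd)
    have h2 : ((2 ^ (2 * (q₁ * q₂)) : ℕ) : ZMod (2*q+1)) = ((1:ℕ) : ZMod (2*q+1)) := by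
      push_cast; exact h1
    have hmod : (2 ^ (2 * (q₁ * q₂)) : ℕ) ≡ 1 [MOD 2*q+1] :=
      (ZMod.natCast_eq_natCast_iff _ _ _).mp h2
    exact (Nat.modEq_iff_dvd' Nat.one_le_two_pow).mp hmod.symm
  have hNdvd : N ∣ 2 ^ (2 * (q₁ * q₂)) - 1 := by
    rw [hN]
    exact hpcop.mul_dvd_of_dvd_of_dvd
      (hE q₁ hord1.2 ⟨q₂, rfl⟩) (hE q₂ hord2.2 ⟨q₁, mul_comm _ _⟩)
  have hrE : r ∣ 2 * (q₁ * q₂) := by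
    have hmod : (2 ^ (2 * (q₁ * q₂)) : ℕ) ≡ 1 [MOD N] :=
      ((Nat.modEq_iff_dvd' Nat.one_le_two_pow).mpr hNdvd).symm
    have h2 : ((2 ^ (2 * (q₁ * q₂)) : ℕ) : ZMod N) = ((1:ℕ) : ZMod N) :=
      (ZMod.natCast_eq_natCast_iff _ _ _).mpr hmod
    have h1 : (2 : ZMod N) ^ (2 * (q₁ * q₂)) = 1 := by push_cast at h2; exact h2
    rw [hr]; exact orderOf_dvd_of_pow_eq_one h1
  -- hence r = m or 2m where m = q₁ q₂
  set m := q₁ * q₂ with hm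
  have hm1 : 1 < m := by
    have := hq₁.one_lt; have := hq₂.one_lt
    calc 1 < q₁ := hq₁.one_lt
    _ ≤ q₁ * q₂ := Nat.le_mul_of_pos_right _ hq₂.pos
  have hmodd : Odd m := (hq₁.odd_of_ne_two (by omega)).mul (hq₂.odd_of_ne_two (by omega))
  obtain ⟨k, hk⟩ := hmr
  have hk2 : k ∣ 2 := by
    have : m * k ∣ m * 2 := by rw [← hk]; rw [mul_comm m 2]; exact hrE
    exact (mul_dvd_mul_iff_left (by omega : m ≠ 0)).mp this
  have hkle : k ≤ 2 := Nat.le_of_dvd (by norm_num) hk2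
  have hkpos : 0 < k := by
    rcases Nat.eq_zero_or_pos k with h | h
    · exfalso
      rw [h, mul_zero] at hk
      have := Nat.eq_zero_of_zero_dvd (hk ▸ hrE)
      omega
    · exact h
  have hk12 : k = 1 ∨ k = 2 := by omega
  -- compute r / m = k
  have hrm : r / m = k := by rw [hk, Nat.mul_div_cancel_left _ (by omega : 0 < m)]
  -- counting
  have key : ((Finset.Icc 1 r).filter
      (fun t => r / Nat.gcd t r = 1 ∨ r / Nat.gcd t r = 2)).card = k := by
    rcases hk12 with h1 | h2
    · -- r = m, odd, filter = {r}
      subst h1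
      rw [mul_one] at hk
      have hfil : (Finset.Icc 1 r).filter
          (fun t => r / Nat.gcd t r = 1 ∨ r / Nat.gcd t r = 2) = {r} := by
        ext t
        simp only [Finset.mem_filter, Finset.mem_Icc, Finset.mem_singleton]
        constructor
        · rintro ⟨⟨ht1, ht2⟩, hc⟩
          have hg : Nat.gcd t r ∣ r := Nat.gcd_dvd_right t r
          have hgt : Nat.gcd t r ∣ t := Nat.gcd_dvd_left t r
          have hrg : r / Nat.gcd t r * Nat.gcd t r = r := Nat.div_mul_cancel hg
          rcases hc with hc | hc
          · rw [hc, one_mul] at hrg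
            have : r ∣ t := hrg ▸ hgt
            exact Nat.le_antisymm ht2 (Nat.le_of_dvd (by omega) this)
          · exfalso
            rw [hc] at hrg
            have : Even r := ⟨Nat.gcd t r, by omega⟩
            rw [hk] at this
            exact (Nat.not_even_iff_odd.mpr hmodd) this
        · intro ht
          subst ht
          refine ⟨⟨by omega, le_refl _⟩, Or.inl ?_⟩
          rw [Nat.gcd_self, Nat.div_self (by omega)]
      rw [hfil, Finset.card_singleton]
    · -- r = 2m, filter = {m, r}
      subst h2
      have hrval : r = m * 2 := hk
      have hmpos : 0 < m := by omega
      have hfil : (Finset.Icc 1 r).filter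
          (fun t => r / Nat.gcd t r = 1 ∨ r / Nat.gcd t r = 2) = {m, r} := by
        ext t
        simp only [Finset.mem_filter, Finset.mem_Icc, Finset.mem_insert, Finset.mem_singleton]
        constructor
        · rintro ⟨⟨ht1, ht2⟩, hc⟩
          have hg : Nat.gcd t r ∣ r := Nat.gcd_dvd_right t r
          have hgt : Nat.gcd t r ∣ t := Nat.gcd_dvd_left t r
          have hrg : r / Nat.gcd t r * Nat.gcd t r = r := Nat.div_mul_cancel hg
          rcases hc with hc | hc
          · rw [hc, one_mul] at hrg
            have : r ∣ t := hrg ▸ hgt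
            exact Or.inr (Nat.le_antisymm ht2 (Nat.le_of_dvd (by omega) this))
          · rw [hc] at hrg
            have hgm : Nat.gcd t r = m := by omega
            have hmt : m ∣ t := hgm ▸ hgt
            obtain ⟨j, hj⟩ := hmt
            have hmj : m * j ≤ m * 2 := by rw [← hj, ← hrval]; exact ht2
            have hj2 : j ≤ 2 := Nat.le_of_mul_le_mul_left hmj hmpos
            have hj1 : 1 ≤ j := by
              rcases Nat.eq_zero_or_pos j with h | h
              · subst h; simp at hj; omega
              · exact h
            interval_cases j
            · left; omega
            · right; omega
        · rintro (ht | ht)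
          · subst ht
            refine ⟨⟨by omega, by omega⟩, Or.inr ?_⟩
            have : Nat.gcd m r = m := by
              rw [hrval]; exact Nat.gcd_eq_left (dvd_mul_right m 2)
            rw [this, hrval, Nat.mul_div_cancel_left _ hmpos]
          · subst ht
            refine ⟨⟨by omega, le_refl _⟩, Or.inl ?_⟩
            rw [Nat.gcd_self, Nat.div_self (by omega)]
      rw [hfil]
      rw [Finset.card_insert_of_notMem (by simp; omega), Finset.card_singleton]
  refine ⟨by rw [key, hrm], ?_⟩
  have hcompl := Finset.card_filter_add_card_filter_not
    (s := Finset.Icc 1 r)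
    (p := fun t => r / Nat.gcd t r = 1 ∨ r / Nat.gcd t r = 2)
  have hicc : (Finset.Icc 1 r).card = r := by
    rw [Nat.card_Icc]; omega
  have hnot : (Finset.Icc 1 r).filter
      (fun t => ¬(r / Nat.gcd t r = 1 ∨ r / Nat.gcd t r = 2)) =
    (Finset.Icc 1 r).filter
      (fun t => r / Nat.gcd t r ≠ 1 ∧ r / Nat.gcd t r ≠ 2) := by
    apply Finset.filter_congr
    intro t _
    tauto
  rw [hicc] at hcompl
  rw [← hnot, hrm]
  omega
end

section
/- Let N = (2q₁+1)(2q₂+1) be a safe semiprime with q₁ ≠ q₂ primes greater than 2. If a unit a modulo N has order 2 and a ≢ −1 (mod N), then a > √(N+1); in particular 2 never has order 2 modulo N. -/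
set_option maxHeartbeats 1000000 in

theorem order_two_elements_are_large
    (q₁ q₂ N : ℕ) (hq₁ : q₁.Prime) (hq₂ : q₂.Prime)
    (hp₁ : (2 * q₁ + 1).Prime) (hp₂ : (2 * q₂ + 1).Prime)
    (hne : q₁ ≠ q₂) (hq₁2 : 2 < q₁) (hq₂2 : 2 < q₂)
    (hN : N = (2 * q₁ + 1) * (2 * q₂ + 1)) :
    (∀ a : (ZMod N)ˣ, orderOf a = 2 → a ≠ -1 →
        (((a : ZMod N).val : ℝ) > Real.sqrt (N + 1))) ∧
    orderOf (2 : ZMod N) ≠ 2 := by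
  have hN49 : 49 ≤ N := by nlinarith
  haveI : NeZero N := ⟨by omega⟩
  haveI : Fact (1 < N) := ⟨by omega⟩
  have hq₁o := hq₁.odd_of_ne_two (by omega)
  have hq₂o := hq₂.odd_of_ne_two (by omega)
  obtain ⟨m₁, hm₁⟩ := hq₁o
  obtain ⟨m₂, hm₂⟩ := hq₂o
  have hcop : Nat.Coprime (2 * q₁ + 1) (2 * q₂ + 1) :=
    (Nat.coprime_primes hp₁ hp₂).mpr (by omega)
  constructor
  · intro a ha _hne1
    set x := (a : ZMod N).val with hx
    have hxa : ((x : ℕ) : ZMod N) = (a : ZMod N) := by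
      rw [hx]; exact ZMod.natCast_val _ |>.trans (ZMod.cast_id _ _)
    clear_value x
    have hx0 : x ≠ 0 := by
      intro h0
      have : (a : ZMod N) = 0 := by
        rw [← hxa, h0]; simp
      exact a.ne_zero this
    have hsq : (a : ZMod N) ^ 2 = 1 := by
      have := pow_orderOf_eq_one a
      rw [ha] at this
      simpa using congrArg (Units.val) this
    have hmod : x ^ 2 ≡ 1 [MOD N] := by
      have : ((x ^ 2 : ℕ) : ZMod N) = ((1 : ℕ) : ZMod N) := by
        push_cast [hxa]; exact hsq
      exact (ZMod.natCast_eq_natCast_iff _ _ _).mp this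
    have hx1 : 1 ≤ x ^ 2 := Nat.one_le_pow _ _ (Nat.pos_of_ne_zero hx0)
    have hdvd : N ∣ x ^ 2 - 1 := (Nat.modEq_iff_dvd' hx1).mp hmod.symm
    -- main claim : N + 1 < x ^ 2
    have key : N + 1 < x ^ 2 := by
      by_contra hle
      push_neg at hle
      obtain ⟨k, hk⟩ := hdvd
      have hk' : x ^ 2 = N * k + 1 := by omega
      have hk1 : k ≤ 1 := by
        by_contra hk2
        push_neg at hk2
        have : 2 * N ≤ N * k := by nlinarith
        omega
      have hxx : x ^ 2 = N + 1 := by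
        interval_cases k
        · -- x ^ 2 = 1, so x = 1, so a = 1, contradicting order 2
          have hx1' : x = 1 := by
            by_contra hx1'
            have : 1 < x ^ 2 := Nat.one_lt_pow (by norm_num) (by omega)
            omega
          have ha1 : a = 1 := Units.ext (by rw [← hxa, hx1']; simp)
          rw [ha1, orderOf_one] at ha
          omega
        · omega
      obtain ⟨y, rfl⟩ : ∃ y, x = y + 1 := ⟨x - 1, by omega⟩
      have hy : y * (y + 2) = N := by nlinarith
      have hy1 : 1 ≤ y := by nlinarith
      -- prime divisibility
      have h1 : (2 * q₁ + 1) ∣ y * (y + 2) := by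
        rw [hy, hN]; exact dvd_mul_right _ _
      have h2 : (2 * q₂ + 1) ∣ y * (y + 2) := by
        rw [hy, hN]; exact dvd_mul_left _ _
      rcases (Nat.Prime.dvd_mul hp₁).mp h1 with h1a | h1b <;>
      rcases (Nat.Prime.dvd_mul hp₂).mp h2 with h2a | h2b
      · have : N ∣ y := by
          rw [hN]; exact Nat.Coprime.mul_dvd_of_dvd_of_dvd hcop h1a h2a
        have := Nat.le_of_dvd (by omega) this
        nlinarith
      · obtain ⟨c, hc⟩ := h1a
        obtain ⟨d, hd⟩ := h2b
        have hcd : c * d = 1 := by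
          have h : ((2 * q₁ + 1) * (2 * q₂ + 1)) * (c * d) =
              ((2 * q₁ + 1) * (2 * q₂ + 1)) * 1 := by
            calc ((2 * q₁ + 1) * (2 * q₂ + 1)) * (c * d)
                = ((2 * q₁ + 1) * c) * ((2 * q₂ + 1) * d) := by ring
              _ = y * (y + 2) := by rw [← hc, ← hd]
              _ = ((2 * q₁ + 1) * (2 * q₂ + 1)) * 1 := by rw [hy, hN, mul_one]
          exact Nat.eq_of_mul_eq_mul_left (by positivity) h
        have hc1 := Nat.eq_one_of_mul_eq_one_right hcd
        have hd1 := Nat.eq_one_of_mul_eq_one_left hcd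
        rw [hc1, mul_one] at hc
        rw [hd1, mul_one] at hd
        omega
      · obtain ⟨c, hc⟩ := h1b
        obtain ⟨d, hd⟩ := h2a
        have hcd : c * d = 1 := by
          have h : ((2 * q₁ + 1) * (2 * q₂ + 1)) * (c * d) =
              ((2 * q₁ + 1) * (2 * q₂ + 1)) * 1 := by
            calc ((2 * q₁ + 1) * (2 * q₂ + 1)) * (c * d)
                = ((2 * q₂ + 1) * d) * ((2 * q₁ + 1) * c) := by ring
              _ = y * (y + 2) := by rw [← hc, ← hd]
              _ = ((2 * q₁ + 1) * (2 * q₂ + 1)) * 1 := by rw [hy, hN, mul_one]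
          exact Nat.eq_of_mul_eq_mul_left (by positivity) h
        have hc1 := Nat.eq_one_of_mul_eq_one_right hcd
        have hd1 := Nat.eq_one_of_mul_eq_one_left hcd
        rw [hc1, mul_one] at hc
        rw [hd1, mul_one] at hd
        omega
      · have : N ∣ y + 2 := by
          rw [hN]; exact Nat.Coprime.mul_dvd_of_dvd_of_dvd hcop h1b h2b
        have := Nat.le_of_dvd (by omega) this
        nlinarith
    -- conclude
    have hlt : Real.sqrt (N + 1) < x := by
      rw [show ((N : ℝ) + 1) = ((N + 1 : ℕ) : ℝ) by push_cast; ring]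
      have hxpos : (0 : ℝ) < x := by positivity
      rw [Real.sqrt_lt' hxpos]
      have : ((N + 1 : ℕ) : ℝ) < ((x ^ 2 : ℕ) : ℝ) := by exact_mod_cast key
      push_cast at this ⊢
      nlinarith
    exact hlt
  · intro h
    have h4 : (2 : ZMod N) ^ 2 = 1 := by
      have := pow_orderOf_eq_one (2 : ZMod N)
      rwa [h] at this
    have h3 : ((3 : ℕ) : ZMod N) = 0 := by
      have : (4 : ZMod N) = 1 := by norm_num at h4 ⊢; linear_combination h4
      push_cast
      linear_combination this
    have := (ZMod.natCast_eq_zero_iff 3 N).mp h3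
    have := Nat.le_of_dvd (by norm_num) this
    omega
end

section
/- For an odd integer N > 1 coprime to a, if r = ord_N(a) is even and ℓ is a prime dividing r such that a^{r/ℓ} ≢ 1 (mod p) fails for at least one but not all prime divisors p of N (i.e., a^{r/ℓ} ≡ 1 modulo some prime factor of N but not modulo all of them), then gcd(a^{r/ℓ} − 1, N) is a nontrivial divisor of N. -/
theorem gcd_prime_power_trick_nontrivial
    (N a : ℕ) (hN1 : 1 < N) (hodd : Odd N) (hcop : Nat.Coprime a N)
    (r ℓ : ℕ) (hr : r = orderOf (a : ZMod N)) (hre : Even r)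
    (hℓ : ℓ.Prime) (hℓr : ℓ ∣ r)
    (hsome : ∃ p : ℕ, p.Prime ∧ p ∣ N ∧ (a : ZMod p) ^ (r / ℓ) = 1)
    (hnotall : ∃ p : ℕ, p.Prime ∧ p ∣ N ∧ (a : ZMod p) ^ (r / ℓ) ≠ 1) :
    1 < Nat.gcd (a ^ (r / ℓ) - 1) N ∧ Nat.gcd (a ^ (r / ℓ) - 1) N < N := by
  obtain ⟨p, hp, hpN, hp1⟩ := hsome
  obtain ⟨q, hq, hqN, hq1⟩ := hnotall
  have ha : 1 ≤ a := by
    rcases Nat.eq_zero_or_pos a with h | h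
    · subst h
      simp [Nat.Coprime] at hcop
      omega
    · exact h
  have ham : 1 ≤ a ^ (r / ℓ) := Nat.one_le_pow _ _ ha
  have key : ∀ s : ℕ, s ∣ a ^ (r / ℓ) - 1 ↔ (a : ZMod s) ^ (r / ℓ) = 1 := by
    intro s
    rw [← Nat.modEq_iff_dvd' ham, Nat.ModEq.comm, ← ZMod.natCast_eq_natCast_iff]
    push_cast
    rfl
  have hpg : p ∣ Nat.gcd (a ^ (r / ℓ) - 1) N :=
    Nat.dvd_gcd ((key p).mpr hp1) hpN
  have hgpos : 0 < Nat.gcd (a ^ (r / ℓ) - 1) N :=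
    Nat.gcd_pos_of_pos_right _ (by omega)
  constructor
  · exact lt_of_lt_of_le hp.one_lt (Nat.le_of_dvd hgpos hpg)
  · rcases lt_or_eq_of_le (Nat.le_of_dvd (by omega) (Nat.gcd_dvd_right _ N)) with h | h
    · exact h
    · exfalso
      apply hq1
      exact (key q).mp (hqN.trans (h ▸ Nat.gcd_dvd_left _ N))
end
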